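/- Fix $\theta \in \mathbb{R}$ and define $\widehat{\theta} = \theta - \frac{2\pi}{3}\lfloor \frac{3\theta}{2\pi} - 1 \rfloor \in [\frac{2\pi}{3}, \frac{4\pi}{3})$ and $\phi_{\min}(\theta) = (\frac{1}{12\pi}(1 - \frac{1}{4\cos^2\widehat{\theta}}))^{1/2}$. For $\phi_0$ with $12\pi\phi_0^2 \le 1$, set $r = \sqrt{1 - 12\pi\phi_0^2}$ and $k_j = \frac{1}{3} + \frac{2}{3} r \cos(\theta + \frac{2\pi j}{3})$ for $j = 0, 1, 2$. Then all three $k_j$ are positive if and only if $|\phi_0| > \phi_{\min}(\theta)$. -/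

import Mathlib

set_option maxHeartbeats 1000000

private lemma cos_2pi3 : Real.cos (2 * Real.pi / 3) = -(1/2) := by
  rw [show (2 * Real.pi / 3 : ℝ) = Real.pi - Real.pi / 3 by ring, Real.cos_pi_sub,
    Real.cos_pi_div_three]

private lemma aux_cos_le (x : ℝ) (hx1 : 2 * Real.pi / 3 ≤ x) (hx2 : x < 4 * Real.pi / 3) :
    Real.cos x ≤ -(1/2) := by
  have hπ := Real.pi_pos
  rcases le_or_gt x Real.pi with h | h
  · calc Real.cos x ≤ Real.cos (2 * Real.pi / 3) :=
        Real.cos_le_cos_of_nonneg_of_le_pi (by positivity) h hx1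
      _ = -(1/2) := cos_2pi3
  · have hx : Real.cos x = Real.cos (2 * Real.pi - x) := by
      rw [Real.cos_sub, Real.cos_two_pi, Real.sin_two_pi]; ring
    rw [hx]
    calc Real.cos (2 * Real.pi - x) ≤ Real.cos (2 * Real.pi / 3) := by
          apply Real.cos_le_cos_of_nonneg_of_le_pi (by linarith) (by linarith) (by linarith)
      _ = -(1/2) := cos_2pi3

private lemma aux_key (x : ℝ) (hx1 : 2 * Real.pi / 3 ≤ x) (hx2 : x < 4 * Real.pi / 3) (k : ℤ) :
    Real.cos x ≤ Real.cos (x + 2 * Real.pi / 3 * (k : ℝ)) := by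
  have hπ := Real.pi_pos
  have h3 : (3:ℤ) * (k / 3) + k % 3 = k := Int.mul_ediv_add_emod k 3
  have hcast : (k : ℝ) = 3 * ((k / 3 : ℤ) : ℝ) + ((k % 3 : ℤ) : ℝ) := by
    exact_mod_cast congrArg (Int.cast : ℤ → ℝ) h3.symm
  have heq : x + 2 * Real.pi / 3 * (k : ℝ)
      = (x + 2 * Real.pi / 3 * ((k % 3 : ℤ) : ℝ)) + (k / 3 : ℤ) * (2 * Real.pi) := by
    rw [hcast]; ring
  rw [heq, Real.cos_add_int_mul_two_pi]
  have hs : k % 3 = 0 ∨ k % 3 = 1 ∨ k % 3 = 2 := by omega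
  have hle : Real.cos x ≤ -(1/2) := aux_cos_le x hx1 hx2
  rcases hs with hs | hs | hs <;> rw [hs]
  · norm_num
  · have h1 : x + 2 * Real.pi / 3 * ((1:ℤ):ℝ) = (x - 4 * Real.pi / 3) + 2 * Real.pi := by
      push_cast; ring
    rw [h1, Real.cos_add_two_pi,
      show x - 4 * Real.pi / 3 = -(4 * Real.pi / 3 - x) by ring, Real.cos_neg]
    have h2 : Real.cos (2 * Real.pi / 3) ≤ Real.cos (4 * Real.pi / 3 - x) := by
      apply Real.cos_le_cos_of_nonneg_of_le_pi (by linarith) (by linarith) (by linarith)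
    rw [cos_2pi3] at h2; linarith
  · have h1 : x + 2 * Real.pi / 3 * ((2:ℤ):ℝ) = (x - 2 * Real.pi / 3) + 2 * Real.pi := by
      push_cast; ring
    rw [h1, Real.cos_add_two_pi]
    have h2 : Real.cos (2 * Real.pi / 3) ≤ Real.cos (x - 2 * Real.pi / 3) := by
      apply Real.cos_le_cos_of_nonneg_of_le_pi (by linarith) (by linarith) (by linarith)
    rw [cos_2pi3] at h2; linarith

/-- Characterization of quiescent Kasner data: all three Kasner exponents
`k_j = 1/3 + (2/3) r cos(θ + 2πj/3)` are positive iff `|φ₀| > φ_min(θ)`,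
where `θ̂ = θ - (2π/3)⌊3θ/(2π) - 1⌋ ∈ [2π/3, 4π/3)` and
`φ_min(θ) = ((1/(12π))(1 - 1/(4cos²θ̂)))^{1/2}`. -/
theorem stmt_13 (θ φ₀ : ℝ) (hφ : 12 * Real.pi * φ₀ ^ 2 ≤ 1) :
    θ - (2 * Real.pi / 3) * (⌊3 * θ / (2 * Real.pi) - 1⌋ : ℝ) ∈
      Set.Ico (2 * Real.pi / 3) (4 * Real.pi / 3) ∧
    ((∀ j : Fin 3,
        0 < 1 / 3 + 2 / 3 * Real.sqrt (1 - 12 * Real.pi * φ₀ ^ 2) *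
          Real.cos (θ + 2 * Real.pi * (j : ℝ) / 3)) ↔
      Real.sqrt ((1 / (12 * Real.pi)) *
        (1 - 1 / (4 * Real.cos (θ - (2 * Real.pi / 3) *
            (⌊3 * θ / (2 * Real.pi) - 1⌋ : ℝ)) ^ 2))) < |φ₀|) := by
  have hπ := Real.pi_pos
  set n : ℤ := ⌊3 * θ / (2 * Real.pi) - 1⌋ with hn
  have hfl : (n : ℝ) ≤ 3 * θ / (2 * Real.pi) - 1 := Int.floor_le _
  have hfl2 : 3 * θ / (2 * Real.pi) - 1 < (n : ℝ) + 1 := Int.lt_floor_add_one _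
  have hdiv : 3 * θ / (2 * Real.pi) * (2 * Real.pi) = 3 * θ := by field_simp
  set x := θ - (2 * Real.pi / 3) * (n : ℝ) with hxdef
  have hx1 : 2 * Real.pi / 3 ≤ x := by nlinarith
  have hx2 : x < 4 * Real.pi / 3 := by nlinarith
  refine ⟨⟨hx1, hx2⟩, ?_⟩
  set c := Real.cos x with hcdef
  have hc : c ≤ -(1/2) := aux_cos_le x hx1 hx2
  have hc1 : -1 ≤ c := Real.neg_one_le_cos x
  have hc2 : (0:ℝ) < c ^ 2 := by nlinarith
  set r := Real.sqrt (1 - 12 * Real.pi * φ₀ ^ 2) with hrdef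
  have h1r : (0:ℝ) ≤ 1 - 12 * Real.pi * φ₀ ^ 2 := by linarith
  have hr0 : 0 ≤ r := Real.sqrt_nonneg _
  have hr2 : r ^ 2 = 1 - 12 * Real.pi * φ₀ ^ 2 := Real.sq_sqrt h1r
  -- angles
  have hangle : ∀ j : Fin 3,
      θ + 2 * Real.pi * (j : ℝ) / 3 = x + 2 * Real.pi / 3 * (((n + (j : ℤ)) : ℤ) : ℝ) := by
    intro j
    push_cast
    rw [hxdef]; ring
  have hmin : ∀ j : Fin 3, c ≤ Real.cos (θ + 2 * Real.pi * (j : ℝ) / 3) := by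
    intro j
    rw [hangle j]
    exact aux_key x hx1 hx2 _
  -- the special index achieving the minimum
  have hj0lt : ((-n) % 3).toNat < 3 := by omega
  set j₀ : Fin 3 := ⟨((-n) % 3).toNat, hj0lt⟩ with hj0def
  have hj0nn : (0:ℤ) ≤ (-n) % 3 := by omega
  have hj0cast : ((j₀ : ℕ) : ℤ) = (-n) % 3 := by
    simp [hj0def, Int.toNat_of_nonneg hj0nn]
  have hj0 : Real.cos (θ + 2 * Real.pi * (j₀ : ℝ) / 3) = c := by
    have hm : n + ((-n) % 3) = 3 * (-((-n) / 3)) := by omega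
    rw [hangle j₀, hj0cast, hm]
    rw [show x + 2 * Real.pi / 3 * (((3 * (-((-n) / 3)) : ℤ)) : ℝ)
        = x + ((-((-n) / 3) : ℤ) : ℝ) * (2 * Real.pi) by push_cast; ring]
    exact Real.cos_add_int_mul_two_pi x _
  -- arithmetic equivalence
  have hA : (0:ℝ) ≤ 1 / (12 * Real.pi) * (1 - 1 / (4 * c ^ 2)) := by
    have h4 : 1 / (4 * c ^ 2) ≤ 1 := by
      rw [div_le_one (by positivity)]; nlinarith
    have : (0:ℝ) ≤ 1 / (12 * Real.pi) := by positivity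
    nlinarith
  have hsqrt : Real.sqrt (1 / (12 * Real.pi) * (1 - 1 / (4 * c ^ 2))) < |φ₀|
      ↔ 1 / (12 * Real.pi) * (1 - 1 / (4 * c ^ 2)) < φ₀ ^ 2 := by
    rw [← Real.sqrt_sq_eq_abs]
    exact Real.sqrt_lt_sqrt_iff hA
  have hkey : 1 / (12 * Real.pi) * (1 - 1 / (4 * c ^ 2)) * (12 * Real.pi * (4 * c ^ 2))
      = 4 * c ^ 2 - 1 := by field_simp; rw [mul_sub, mul_one_div_cancel hc2.ne']; ring
  have hpos : (0:ℝ) < 12 * Real.pi * (4 * c ^ 2) := by positivity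
  have hPQ : (0 < 1 / 3 + 2 / 3 * r * c)
      ↔ 1 / (12 * Real.pi) * (1 - 1 / (4 * c ^ 2)) < φ₀ ^ 2 := by
    constructor
    · intro h
      have h2 : r * (-c) < 1/2 := by nlinarith
      have h3 : (r * (-c)) ^ 2 < 1/4 := by
        nlinarith [mul_nonneg hr0 (by linarith : (0:ℝ) ≤ -c)]
      have h4 : c ^ 2 * (1 - 12 * Real.pi * φ₀ ^ 2) < 1/4 := by nlinarith [hr2]
      rw [← mul_lt_mul_iff_of_pos_right hpos, hkey]
      nlinarith
    · intro h
      rw [← mul_lt_mul_iff_of_pos_right hpos, hkey] at h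
      have h4 : (r * (-c)) ^ 2 < 1/4 := by nlinarith [hr2]
      have h2 : r * (-c) < 1/2 := by
        nlinarith [mul_nonneg hr0 (by linarith : (0:ℝ) ≤ -c)]
      nlinarith
  rw [← hsqrt] at hPQ
  constructor
  · intro h
    have := h j₀
    rw [hj0] at this
    exact hPQ.mp this
  · intro h j
    have hbase := hPQ.mpr h
    nlinarith [hmin j, mul_le_mul_of_nonneg_left (hmin j) hr0]
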